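/- Let α = {α(j)}_{j≥0} be a sequence and λ ≥ 2, with α(j) = a(j + λ) for a positive decreasing function a. Define the integral operator K on L^2(0,∞) with kernel K(t,s) = a(λ + ⌊t⌋ + ⌊s⌋). Then under the identification L^2(0,∞) ≅ ℓ²(ℤ_+) ⊗ L^2(0,1), K = H(α) ⊗ R, where H(α) is the Hankel matrix {α(j+k)} and R is the rank-one operator f ↦ (∫_0^1 f) · 1 on L^2(0,1). Consequently ‖K‖ = ‖H(α)‖ and ‖K‖_{S_p} = ‖H(α)‖_{S_p} for all p > 0. -/

import Mathlib

open MeasureTheory Set ContinuousLinearMap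

/-- The `n`-th approximation number (= singular value, on Hilbert spaces) of a bounded
operator: the distance from `A` to the operators of rank at most `n`. -/
noncomputable def singularValue {E F : Type*} [NormedAddCommGroup E] [NormedAddCommGroup F]
    [NormedSpace ℂ E] [NormedSpace ℂ F] (A : E →L[ℂ] F) (n : ℕ) : ℝ :=
  sInf {r : ℝ | ∃ T : E →L[ℂ] F,
    Module.rank ℂ (LinearMap.range (T : E →ₗ[ℂ] F)) ≤ (n : Cardinal) ∧ r = ‖A - T‖}

/-- Membership in the Schatten class `S_p`. -/
def MemSchatten {E F : Type*} [NormedAddCommGroup E] [NormedAddCommGroup F]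
    [NormedSpace ℂ E] [NormedSpace ℂ F] (p : ℝ) (A : E →L[ℂ] F) : Prop :=
  Summable (fun n => singularValue A n ^ p)

/-- The Schatten `p`-(quasi)norm `(∑ sₙ(A)^p)^{1/p}`. -/
noncomputable def schattenNorm {E F : Type*} [NormedAddCommGroup E] [NormedAddCommGroup F]
    [NormedSpace ℂ E] [NormedSpace ℂ F] (p : ℝ) (A : E →L[ℂ] F) : ℝ :=
  (∑' n : ℕ, singularValue A n ^ p) ^ (1 / p)


open scoped ENNReal NNReal ComplexConjugate

noncomputable section
namespace FloorAux

local notation "μ" => volume.restrict (Set.Ioi (0:ℝ))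

lemma disj : Pairwise (Function.onFun Disjoint (fun j : ℕ => Set.Ioo (j:ℝ) (j+1))) := by
  intro i j hij
  refine Set.disjoint_left.2 fun x hxi hxj => hij ?_
  have h0 : (0:ℝ) ≤ x := le_of_lt (lt_of_le_of_lt (Nat.cast_nonneg i) hxi.1)
  have hi : ⌊x⌋₊ = i := Nat.floor_eq_on_Ico i x ⟨le_of_lt hxi.1, hxi.2⟩
  have hj : ⌊x⌋₊ = j := Nat.floor_eq_on_Ico j x ⟨le_of_lt hxj.1, hxj.2⟩
  omega

lemma sub_range : Set.Ioi (0:ℝ) \ (⋃ j : ℕ, Set.Ioo (j:ℝ) (j+1)) ⊆ Set.range ((↑) : ℕ → ℝ) := by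
  rintro t ⟨ht, hnt⟩
  simp only [Set.mem_iUnion, not_exists, Set.mem_Ioo, not_and, not_lt] at hnt
  have h0 : (0:ℝ) ≤ t := le_of_lt ht
  have h1 : (⌊t⌋₊ : ℝ) ≤ t := Nat.floor_le h0
  have h2 : t < (⌊t⌋₊ : ℝ) + 1 := Nat.lt_floor_add_one t
  rcases eq_or_lt_of_le h1 with h | h
  · exact ⟨⌊t⌋₊, h⟩
  · exact absurd (hnt ⌊t⌋₊ h) (not_le.2 h2)

lemma ae_eq_iUnion : Set.Ioi (0:ℝ) =ᵐ[volume] ⋃ j : ℕ, Set.Ioo (j:ℝ) (j+1) := by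
  refine MeasureTheory.ae_eq_set.2 ⟨?_, ?_⟩
  · exact measure_mono_null sub_range ((Set.countable_range _).measure_zero _)
  · have : (⋃ j : ℕ, Set.Ioo (j:ℝ) (j+1)) \ Set.Ioi (0:ℝ) = ∅ := by
      refine Set.diff_eq_empty.2 ?_
      refine Set.iUnion_subset fun j x hx => ?_
      exact lt_of_le_of_lt (Nat.cast_nonneg j) hx.1
    simp [this]

lemma lintegral_floor (c : ℕ → ℝ≥0∞) :
    ∫⁻ t in Set.Ioi (0:ℝ), c ⌊t⌋₊ ∂volume = ∑' j : ℕ, c j := by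
  rw [setLIntegral_congr ae_eq_iUnion,
    lintegral_iUnion (fun j => measurableSet_Ioo) disj]
  congr 1
  funext j
  rw [setLIntegral_congr_fun_ae measurableSet_Ioo
    (MeasureTheory.ae_of_all _ (fun t ht => by
      rw [Nat.floor_eq_on_Ico j t ⟨le_of_lt ht.1, ht.2⟩]))]
  simp [Real.volume_Ioo]


lemma eLpNorm_floor (y : ℕ → ℂ) (hy : Summable fun j => ‖y j‖^2) :
    eLpNorm (fun t : ℝ => y ⌊t⌋₊) 2 μ = ENNReal.ofReal ((∑' j : ℕ, ‖y j‖^2) ^ (1/2:ℝ)) := by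
  rw [eLpNorm_eq_lintegral_rpow_enorm_toReal (by norm_num) (by norm_num)]
  have h2 : (2:ℝ≥0∞).toReal = (2:ℝ) := by norm_num
  rw [h2]
  have key : ∫⁻ t, (‖y ⌊t⌋₊‖₊ : ℝ≥0∞) ^ (2:ℝ) ∂μ = ENNReal.ofReal (∑' j : ℕ, ‖y j‖^2) := by
    have := lintegral_floor (fun j => (‖y j‖₊ : ℝ≥0∞) ^ (2:ℝ))
    rw [this]
    rw [ENNReal.ofReal_tsum_of_nonneg (fun n => sq_nonneg _) hy]
    congr 1
    funext j
    have hr : ‖y j‖ ^ 2 = ‖y j‖ ^ (2:ℝ) := by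
      rw [show (2:ℝ) = ((2:ℕ):ℝ) by norm_num, Real.rpow_natCast]
    rw [hr, ← ENNReal.ofReal_coe_nnreal, coe_nnnorm,
      ← ENNReal.ofReal_rpow_of_nonneg (norm_nonneg _) (by norm_num : (0:ℝ) ≤ 2)]
  erw [key, ← ENNReal.ofReal_rpow_of_nonneg (tsum_nonneg fun j => sq_nonneg _) (by norm_num)]

lemma memℒp_floor (y : ℕ → ℂ) (hy : Summable fun j => ‖y j‖^2) :
    MemLp (fun t : ℝ => y ⌊t⌋₊) 2 μ := by
  refine ⟨((measurable_of_countable y).comp Nat.measurable_floor).aestronglyMeasurable, ?_⟩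
  rw [eLpNorm_floor y hy]
  exact ENNReal.ofReal_lt_top

lemma lp_summable (x : lp (fun _ : ℕ => ℂ) 2) : Summable fun j => ‖(x : ∀ _ : ℕ, ℂ) j‖^2 := by
  have := (memℓp_gen_iff (by norm_num : 0 < (2:ℝ≥0∞).toReal)).1 (lp.memℓp x)
  simpa [show (2:ℝ≥0∞).toReal = (2:ℝ) by norm_num,
    show ∀ r : ℝ, r ^ (2:ℝ) = r ^ 2 from fun r => by
      rw [show (2:ℝ) = ((2:ℕ):ℝ) by norm_num, Real.rpow_natCast]] using this

def PhiFun (x : lp (fun _ : ℕ => ℂ) 2) : Lp ℂ 2 μ :=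
  MemLp.toLp (fun t : ℝ => (x : ∀ _ : ℕ, ℂ) ⌊t⌋₊) (memℒp_floor (fun j => x j) (lp_summable x))

lemma coeFn_PhiFun (x : lp (fun _ : ℕ => ℂ) 2) :
    (PhiFun x : ℝ → ℂ) =ᵐ[μ] fun t : ℝ => (x : ∀ _ : ℕ, ℂ) ⌊t⌋₊ :=
  MemLp.coeFn_toLp _

lemma norm_PhiFun (x : lp (fun _ : ℕ => ℂ) 2) : ‖PhiFun x‖ = ‖x‖ := by
  rw [PhiFun, MeasureTheory.Lp.norm_toLp, eLpNorm_floor _ (lp_summable x),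
    ENNReal.toReal_ofReal (Real.rpow_nonneg (tsum_nonneg fun j => sq_nonneg _) _),
    lp.norm_eq_tsum_rpow (by norm_num : 0 < (2:ℝ≥0∞).toReal) x]
  have h1 : (∑' j:ℕ, ‖(x : ∀ _ : ℕ, ℂ) j‖ ^ ((2:ℝ≥0∞)).toReal) = ∑' j:ℕ, ‖(x : ∀ _ : ℕ, ℂ) j‖^2 :=
    tsum_congr fun j => by
      rw [show ((2:ℝ≥0∞).toReal) = ((2:ℕ):ℝ) by norm_num, Real.rpow_natCast]
  rw [h1]
  norm_num

def Phi0 : lp (fun _ : ℕ => ℂ) 2 →ₗᵢ[ℂ] Lp ℂ 2 μ where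
  toFun := PhiFun
  map_add' x y := by
    refine (MeasureTheory.Lp.ext ?_).symm
    filter_upwards [Lp.coeFn_add (PhiFun x) (PhiFun y), coeFn_PhiFun x, coeFn_PhiFun y,
      coeFn_PhiFun (x + y)] with t h1 h2 h3 h4
    rw [h1, Pi.add_apply, h2, h3, h4, lp.coeFn_add, Pi.add_apply]
  map_smul' c x := by
    refine (MeasureTheory.Lp.ext ?_).symm
    filter_upwards [Lp.coeFn_smul c (PhiFun x), coeFn_PhiFun x,
      coeFn_PhiFun (c • x)] with t h1 h2 h3
    rw [RingHom.id_apply, h1, Pi.smul_apply, h2, h3, lp.coeFn_smul, Pi.smul_apply]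
  norm_map' x := norm_PhiFun x

def Phi : lp (fun _ : ℕ => ℂ) 2 →L[ℂ] Lp ℂ 2 μ := Phi0.toContinuousLinearMap

lemma coeFn_Phi (x : lp (fun _ : ℕ => ℂ) 2) :
    (Phi x : ℝ → ℂ) =ᵐ[μ] fun t : ℝ => (x : ∀ _ : ℕ, ℂ) ⌊t⌋₊ := coeFn_PhiFun x

lemma norm_Phi_apply (x : lp (fun _ : ℕ => ℂ) 2) : ‖Phi x‖ = ‖x‖ := Phi0.norm_map x

def Psi (f : Lp ℂ 2 μ) (k : ℕ) : ℂ := ∫ s in Set.Ioo (k:ℝ) ((k:ℝ)+1), f s ∂volume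

def Fk (k : ℕ) : Set ℝ := {s : ℝ | ⌊s⌋₊ = k}

lemma Fk_meas (k : ℕ) : MeasurableSet (Fk k) :=
  Nat.measurable_floor (measurableSet_singleton k)

lemma floorset_ae (k : ℕ) :
    ((Fk k ∩ Set.Ioi (0:ℝ) : Set ℝ)) =ᵐ[volume] Set.Ioo (k:ℝ) ((k:ℝ)+1) := by
  refine MeasureTheory.ae_eq_set.2 ⟨?_, ?_⟩
  · refine measure_mono_null (fun s hs => ?_) (measure_singleton (k:ℝ))
    obtain ⟨⟨hs1, hs2⟩, hs3⟩ := hs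
    have h0 : (0:ℝ) ≤ s := le_of_lt hs2
    have hfl : ⌊s⌋₊ = k := hs1
    have h1 : (k:ℝ) ≤ s := by rw [← hfl]; exact Nat.floor_le h0
    have h2 : s < (k:ℝ) + 1 := by rw [← hfl]; exact Nat.lt_floor_add_one s
    simp only [Set.mem_Ioo, not_and, not_lt] at hs3
    rcases eq_or_lt_of_le h1 with h | h
    · simp [← h]
    · exact absurd (hs3 h) (not_le.2 h2)
  · have he : Set.Ioo (k:ℝ) ((k:ℝ)+1) \ (Fk k ∩ Set.Ioi (0:ℝ)) = ∅ := by
      refine Set.diff_eq_empty.2 fun s hs => ?_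
      have h0 : (0:ℝ) < s := lt_of_le_of_lt (Nat.cast_nonneg k) hs.1
      exact ⟨Nat.floor_eq_on_Ico k s ⟨le_of_lt hs.1, hs.2⟩, h0⟩
    rw [he]
    simp

lemma adj_coord (f : Lp ℂ 2 μ) (k : ℕ) :
    ((ContinuousLinearMap.adjoint Phi f : lp (fun _ : ℕ => ℂ) 2) : ∀ _ : ℕ, ℂ) k = Psi f k := by
  have h0 : ((ContinuousLinearMap.adjoint Phi f : lp (fun _ : ℕ => ℂ) 2) : ∀ _ : ℕ, ℂ) k
      = @inner ℂ _ _ (lp.single 2 k (1:ℂ)) (ContinuousLinearMap.adjoint Phi f) := by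
    rw [lp.inner_single_left]
    simp [RCLike.inner_apply]
  rw [h0, ContinuousLinearMap.adjoint_inner_right, MeasureTheory.L2.inner_def]
  have h1 : ∫ t, @inner ℂ _ _ ((Phi (lp.single 2 k 1) : ℝ → ℂ) t) ((f : ℝ → ℂ) t) ∂μ
      = ∫ t, (Fk k).indicator (fun s => (f : ℝ → ℂ) s) t ∂μ := by
    refine integral_congr_ae ?_
    filter_upwards [coeFn_Phi (lp.single 2 k 1)] with t ht
    rw [ht]
    by_cases h : ⌊t⌋₊ = k
    · simp [Set.indicator, Fk, h, lp.single_apply, RCLike.inner_apply]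
    · simp [Set.indicator, Fk, h, lp.single_apply, RCLike.inner_apply]
  rw [h1, integral_indicator (Fk_meas k), Measure.restrict_restrict (Fk_meas k),
    setIntegral_congr_set (floorset_ae k), Psi]

lemma univ_ae : (Set.univ : Set ℝ) =ᵐ[μ] ⋃ j : ℕ, Set.Ioo (j:ℝ) ((j:ℝ)+1) := by
  refine MeasureTheory.ae_eq_set.2 ⟨?_, by simp⟩
  have hmeas : MeasurableSet (⋃ j : ℕ, Set.Ioo (j:ℝ) ((j:ℝ)+1)) :=
    MeasurableSet.iUnion fun j => measurableSet_Ioo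
  rw [← Set.compl_eq_univ_diff, Measure.restrict_apply hmeas.compl]
  refine measure_mono_null (fun t ht => ?_) ((Set.countable_range ((↑) : ℕ → ℝ)).measure_zero _)
  exact sub_range ⟨ht.2, ht.1⟩

lemma integrable_kernel_mul (β : ℕ → ℝ) (hs : Summable fun j => ‖β j‖^2)
    (f : Lp ℂ 2 μ) (k : ℕ) :
    Integrable (fun s : ℝ => (β (⌊s⌋₊ + k) : ℂ) * (f : ℝ → ℂ) s) μ := by
  have hsum2 : Summable fun j => ‖((β (j + k) : ℂ))‖^2 := by
    have h := (summable_nat_add_iff k).2 hs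
    simpa [Complex.norm_real] using h
  have hmem : MemLp (fun s : ℝ => (β (⌊s⌋₊ + k) : ℂ)) 2 μ :=
    memℒp_floor (fun j => (β (j + k) : ℂ)) hsum2
  have h121 : (1:ℝ≥0∞)/1 = 1/2 + 1/2 := by
    simp [one_div, ENNReal.inv_two_add_inv_two]
  have h := (MeasureTheory.Lp.memLp f).smul (r := 1) hmem
  rw [← memLp_one_iff_integrable]
  exact h

lemma integral_main (β : ℕ → ℝ) (hs : Summable fun j => ‖β j‖^2) (f : Lp ℂ 2 μ) (k : ℕ) :
    ∫ s in Set.Ioi (0:ℝ), (β (⌊s⌋₊ + k) : ℂ) * f s ∂volume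
      = ∑' j : ℕ, (β (j + k) : ℂ) * Psi f j := by
  have hint := integrable_kernel_mul β hs f k
  have h1 : ∫ s in Set.Ioi (0:ℝ), (β (⌊s⌋₊ + k) : ℂ) * f s ∂volume
      = ∫ s in (⋃ j : ℕ, Set.Ioo (j:ℝ) ((j:ℝ)+1)), (β (⌊s⌋₊ + k) : ℂ) * f s ∂μ := by
    rw [← setIntegral_congr_set univ_ae, setIntegral_univ]
  rw [h1, integral_iUnion (fun j => measurableSet_Ioo) disj hint.integrableOn]
  refine tsum_congr fun j => ?_
  have hsub : Set.Ioo (j:ℝ) ((j:ℝ)+1) ⊆ Set.Ioi (0:ℝ) :=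
    fun s hs' => lt_of_le_of_lt (Nat.cast_nonneg j) hs'.1
  rw [Measure.restrict_restrict measurableSet_Ioo, Set.inter_eq_left.2 hsub,
    setIntegral_congr_fun measurableSet_Ioo
      (fun s hs' => by rw [Nat.floor_eq_on_Ico j s ⟨le_of_lt hs'.1, hs'.2⟩]),
    integral_const_mul, Psi]

lemma K_eq (β : ℕ → ℝ) (hs : Summable fun j => ‖β j‖^2)
    (Hβ : lp (fun _ : ℕ => ℂ) 2 →L[ℂ] lp (fun _ : ℕ => ℂ) 2)
    (hHβ : ∀ x : lp (fun _ : ℕ => ℂ) 2, ∀ k : ℕ,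
      (Hβ x : ∀ _ : ℕ, ℂ) k = ∑' j : ℕ, (β (j + k) : ℂ) * (x : ∀ _ : ℕ, ℂ) j)
    (K : Lp ℂ 2 μ →L[ℂ] Lp ℂ 2 μ)
    (hK : ∀ f : Lp ℂ 2 μ, (K f : ℝ → ℂ) =ᵐ[μ]
       fun t => ∫ s in Set.Ioi (0:ℝ), (β (⌊s⌋₊ + ⌊t⌋₊) : ℂ) * f s ∂volume) :
    K = Phi.comp (Hβ.comp (ContinuousLinearMap.adjoint Phi)) := by
  ext f
  have hco := coeFn_Phi (Hβ (ContinuousLinearMap.adjoint Phi f))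
  filter_upwards [hK f, hco] with t h1 h2
  rw [h1, ContinuousLinearMap.comp_apply, ContinuousLinearMap.comp_apply, h2, hHβ]
  have hc : ∀ j : ℕ, ((ContinuousLinearMap.adjoint Phi f : lp (fun _ : ℕ => ℂ) 2)
      : ∀ _ : ℕ, ℂ) j = Psi f j := adj_coord f
  calc ∫ s in Set.Ioi (0:ℝ), (β (⌊s⌋₊ + ⌊t⌋₊) : ℂ) * f s ∂volume
      = ∑' j : ℕ, (β (j + ⌊t⌋₊) : ℂ) * Psi f j := integral_main β hs f ⌊t⌋₊
    _ = _ := tsum_congr fun j => by rw [hc j]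

lemma adjPhi_Phi (y : lp (fun _ : ℕ => ℂ) 2) :
    ContinuousLinearMap.adjoint Phi (Phi y) = y := by
  refine ext_inner_left ℂ fun v => ?_
  rw [ContinuousLinearMap.adjoint_inner_right]
  exact Phi0.inner_map_map v y

lemma norm_Phi_le : ‖Phi‖ ≤ 1 :=
  ContinuousLinearMap.opNorm_le_bound _ zero_le_one fun x => by
    rw [norm_Phi_apply, one_mul]

lemma norm_adjPhi_le : ‖ContinuousLinearMap.adjoint Phi‖ ≤ 1 := by
  rw [LinearIsometryEquiv.norm_map]
  exact norm_Phi_le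

end FloorAux

section SV
universe u
variable {E F E' F' : Type u} [NormedAddCommGroup E] [NormedAddCommGroup F]
  [NormedAddCommGroup E'] [NormedAddCommGroup F']
  [NormedSpace ℂ E] [NormedSpace ℂ F] [NormedSpace ℂ E'] [NormedSpace ℂ F']

lemma norm_PAQ_le (A : E →L[ℂ] F) (P : F →L[ℂ] F') (Q : E' →L[ℂ] E)
    (hP : ‖P‖ ≤ 1) (hQ : ‖Q‖ ≤ 1) : ‖P.comp (A.comp Q)‖ ≤ ‖A‖ := by
  calc ‖P.comp (A.comp Q)‖ ≤ ‖P‖ * ‖A.comp Q‖ := ContinuousLinearMap.opNorm_comp_le _ _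
    _ ≤ ‖P‖ * (‖A‖ * ‖Q‖) := by
        refine mul_le_mul_of_nonneg_left (ContinuousLinearMap.opNorm_comp_le _ _) (norm_nonneg _)
    _ ≤ 1 * (‖A‖ * 1) := mul_le_mul hP (mul_le_mul_of_nonneg_left hQ (norm_nonneg A))
        (mul_nonneg (norm_nonneg _) (norm_nonneg _)) zero_le_one
    _ = ‖A‖ := by ring

lemma sv_comp_le (A : E →L[ℂ] F) (P : F →L[ℂ] F') (Q : E' →L[ℂ] E)
    (hP : ‖P‖ ≤ 1) (hQ : ‖Q‖ ≤ 1) (n : ℕ) :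
    singularValue (P.comp (A.comp Q)) n ≤ singularValue A n := by
  unfold singularValue
  have hrank0 : Module.rank ℂ (LinearMap.range ((0 : E →L[ℂ] F) : E →ₗ[ℂ] F))
      ≤ (n : Cardinal) := by
    have h : ((0 : E →L[ℂ] F) : E →ₗ[ℂ] F) = 0 := rfl
    rw [h, LinearMap.range_zero]
    simpa using Cardinal.zero_le _
  refine le_csInf ⟨‖A - 0‖, 0, hrank0, rfl⟩ ?_
  rintro r ⟨T, hT, rfl⟩
  refine csInf_le_of_le ⟨0, ?_⟩ ⟨P.comp (T.comp Q), ?_, rfl⟩ ?_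
  · rintro x ⟨S, -, rfl⟩
    exact norm_nonneg _
  · have h1 : ((P.comp (T.comp Q) : E' →L[ℂ] F') : E' →ₗ[ℂ] F')
        = (P : F →ₗ[ℂ] F').comp (((T : E →ₗ[ℂ] F)).comp (Q : E' →ₗ[ℂ] E)) := rfl
    rw [h1, LinearMap.range_comp]
    exact le_trans (rank_map_le _ _)
      (le_trans (Submodule.rank_mono (LinearMap.range_comp_le_range _ _)) hT)
  · have h2 : P.comp (A.comp Q) - P.comp (T.comp Q) = P.comp ((A - T).comp Q) := by
      rw [ContinuousLinearMap.sub_comp, ContinuousLinearMap.comp_sub]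
    rw [h2]
    exact norm_PAQ_le (A - T) P Q hP hQ

end SV

/-- For `λ ≥ 2` and `α(j) = a(j+λ)` with `a` positive decreasing, the integral operator `K`
on `L²(0,∞)` with kernel `a(λ + ⌊t⌋ + ⌊s⌋)` is, under `L²(0,∞) ≅ ℓ² ⊗ L²(0,1)`, the
tensor product of the Hankel matrix `H(α)` with a norm-one rank-one operator: concretely
`K = Φ H(α) Φ*` for an isometry `Φ : ℓ² → L²(0,∞)`. Consequently `‖K‖ = ‖H(α)‖` and
`‖K‖_{S_p} = ‖H(α)‖_{S_p}` for all `p > 0`. -/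
theorem floor_kernel_tensor_factorization
    (a : ℝ → ℝ) (ha_pos : ∀ t, 0 < t → 0 < a t) (ha_mono : AntitoneOn a (Ioi 0))
    (lam : ℝ) (hlam : 2 ≤ lam)
    (α : ℕ → ℝ) (hα : ∀ j : ℕ, α j = a ((j : ℝ) + lam))
    (K : Lp ℂ 2 (volume.restrict (Ioi (0:ℝ))) →L[ℂ] Lp ℂ 2 (volume.restrict (Ioi (0:ℝ))))
    (hK : ∀ f : Lp ℂ 2 (volume.restrict (Ioi (0:ℝ))),
      (K f : ℝ → ℂ) =ᵐ[volume.restrict (Ioi (0:ℝ))]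
        fun t => ∫ s in Ioi (0:ℝ), (a (lam + (⌊t⌋ : ℝ) + (⌊s⌋ : ℝ)) : ℂ) * f s)
    (Hα : lp (fun _ : ℕ => ℂ) 2 →L[ℂ] lp (fun _ : ℕ => ℂ) 2)
    (hHα : ∀ x : lp (fun _ : ℕ => ℂ) 2, ∀ k : ℕ,
      (Hα x : ∀ _ : ℕ, ℂ) k = ∑' j : ℕ, (α (j + k) : ℂ) * (x : ∀ _ : ℕ, ℂ) j) :
    (∃ Φ : lp (fun _ : ℕ => ℂ) 2 →L[ℂ] Lp ℂ 2 (volume.restrict (Ioi (0:ℝ))),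
        (∀ x, ‖Φ x‖ = ‖x‖) ∧ K = Φ.comp (Hα.comp (adjoint Φ))) ∧
    ‖K‖ = ‖Hα‖ ∧
    ∀ p : ℝ, 0 < p →
      schattenNorm p K = schattenNorm p Hα ∧ (MemSchatten p Hα ↔ MemSchatten p K) := by
  classical
  have hcoord : ∀ k : ℕ, ((Hα (lp.single 2 0 1) : ∀ _ : ℕ, ℂ)) k = (α k : ℂ) := by
    intro k
    rw [hHα, tsum_eq_single 0]
    · rw [lp.single_apply]
      simp
    · intro j hj
      rw [lp.single_apply]
      simp [hj]
  have hsum : Summable fun j => ‖α j‖^2 := by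
    have hv := FloorAux.lp_summable (Hα (lp.single 2 0 1))
    simp only [hcoord, Complex.norm_real] at hv
    exact hv
  have hK' : ∀ f : Lp ℂ 2 (volume.restrict (Ioi (0:ℝ))),
      (K f : ℝ → ℂ) =ᵐ[volume.restrict (Ioi (0:ℝ))]
        fun t => ∫ s in Set.Ioi (0:ℝ), (α (⌊s⌋₊ + ⌊t⌋₊) : ℂ) * f s ∂volume := by
    intro f
    filter_upwards [hK f, ae_restrict_mem measurableSet_Ioi] with t h1 ht
    rw [h1]
    refine integral_congr_ae ?_
    filter_upwards [ae_restrict_mem measurableSet_Ioi] with s hs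
    congr 1
    rw [hα]
    have ht2 : ((⌊t⌋₊ : ℕ) : ℝ) = ((⌊t⌋ : ℤ) : ℝ) := by
      exact_mod_cast congrArg (Int.cast : ℤ → ℝ) (Int.natCast_floor_eq_floor (le_of_lt ht))
    have hs2 : ((⌊s⌋₊ : ℕ) : ℝ) = ((⌊s⌋ : ℤ) : ℝ) := by
      exact_mod_cast congrArg (Int.cast : ℤ → ℝ) (Int.natCast_floor_eq_floor (le_of_lt hs))
    have harg : lam + (⌊t⌋ : ℝ) + (⌊s⌋ : ℝ) = ((⌊s⌋₊ + ⌊t⌋₊ : ℕ) : ℝ) + lam := by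
      push_cast
      rw [← ht2, ← hs2]
      push_cast
      ring
    rw [harg]
  have hKeq : K = FloorAux.Phi.comp (Hα.comp (adjoint FloorAux.Phi)) :=
    FloorAux.K_eq α hsum Hα hHα K hK'
  have hPt := FloorAux.adjPhi_Phi
  have hHeq : Hα = (adjoint FloorAux.Phi).comp (K.comp FloorAux.Phi) := by
    refine ContinuousLinearMap.ext fun x => ?_
    rw [ContinuousLinearMap.comp_apply, ContinuousLinearMap.comp_apply, hKeq,
      ContinuousLinearMap.comp_apply, ContinuousLinearMap.comp_apply, hPt, hPt]
  have hsv : ∀ n, singularValue K n = singularValue Hα n := by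
    intro n
    refine le_antisymm ?_ ?_
    · rw [hKeq]
      exact sv_comp_le Hα FloorAux.Phi (adjoint FloorAux.Phi)
        FloorAux.norm_Phi_le FloorAux.norm_adjPhi_le n
    · conv_lhs => rw [hHeq]
      exact sv_comp_le K (adjoint FloorAux.Phi) FloorAux.Phi
        FloorAux.norm_adjPhi_le FloorAux.norm_Phi_le n
  have hnorm : ‖K‖ = ‖Hα‖ := by
    refine le_antisymm ?_ ?_
    · rw [hKeq]
      exact norm_PAQ_le Hα _ _ FloorAux.norm_Phi_le FloorAux.norm_adjPhi_le
    · conv_lhs => rw [hHeq]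
      exact norm_PAQ_le K _ _ FloorAux.norm_adjPhi_le FloorAux.norm_Phi_le
  refine ⟨⟨FloorAux.Phi, FloorAux.norm_Phi_apply, hKeq⟩, hnorm, fun p hp => ⟨?_, ?_⟩⟩
  · unfold schattenNorm
    congr 1
    exact tsum_congr fun n => by rw [hsv n]
  · unfold MemSchatten
    have he : (fun n => singularValue Hα n ^ p) = fun n => singularValue K n ^ p :=
      funext fun n => by rw [hsv n]
    rw [he]
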